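/- arXiv:1609.04088 — 6 statements merged into one kernel-verified Lean document; each statement's English description precedes it below -/
import Mathlib

section
/- Let X be an extremally disconnected Stone space, let F be a monotone map on the clopen subsets of X, and let L be the least clopen fixed point of F. Define the monotone operator Φ on the powerset of X by Φ(W) = { x ∈ X | ∃ C ⊆ X such that (for every clopen U ⊆ X with C ⊆ U one has x ∈ F(U)) and C ⊆ W }. Then the least fixed point of Φ in the powerset lattice of X equals L (as a subset of X). (The operator Φ encodes one round of the least clopen fixpoint game 𝒢^I_μ(F), in which ∃ moves from x to a set C with x ∈ F(U) for all clopen U ⊇ C and ∀ picks an element of C, all infinite plays being won by ∀; its least fixed point is ∃'s winning region, so this is Proposition 3.1(1).) -/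
/-- Proposition 3.1(1): the least fixed point (in the powerset of `X`) of the operator
`Φ` encoding one round of the least clopen fixpoint game `𝒢^I_μ(F)` equals the least
clopen fixed point `L` of `F`. -/
theorem lfp_gameI_mu_eq_least_clopen_fixedPoint
    {X : Type*} [TopologicalSpace X] [CompactSpace X] [T2Space X]
    [TotallyDisconnectedSpace X] [ExtremallyDisconnected X]
    (F : Set X → Set X) (hFclopen : ∀ U : Set X, IsClopen U → IsClopen (F U))
    (hFmono : ∀ U V : Set X, IsClopen U → IsClopen V → U ⊆ V → F U ⊆ F V)
    (L : Set X) (hLclopen : IsClopen L) (hLfix : F L = L)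
    (hLleast : ∀ A : Set X, IsClopen A → F A ⊆ A → L ⊆ A)
    (Φ : Set X → Set X)
    (hΦ : Φ = fun W : Set X =>
      {x : X | ∃ C : Set X, (∀ U : Set X, IsClopen U → C ⊆ U → x ∈ F U) ∧ C ⊆ W}) :
    Monotone Φ ∧ ∀ hm : Monotone Φ, OrderHom.lfp ⟨Φ, hm⟩ = L := by
  have hmono : Monotone Φ := by
    subst hΦ
    rintro W1 W2 h x ⟨C, h1, h2⟩
    exact ⟨C, h1, h2.trans h⟩
  refine ⟨hmono, fun hm => ?_⟩
  set W : Set X := OrderHom.lfp (⟨Φ, hm⟩ : Set X →o Set X) with hW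
  have hfix : Φ W = W := OrderHom.map_lfp (⟨Φ, hm⟩ : Set X →o Set X)
  apply le_antisymm
  · -- lfp Φ ⊆ L
    apply OrderHom.lfp_le
    show Φ L ⊆ L
    rw [hΦ]
    rintro x ⟨C, h1, h2⟩
    have := h1 L hLclopen h2
    rwa [hLfix] at this
  · -- L ⊆ lfp Φ
    set G : Set X := ⋂ U ∈ {U : Set X | IsClopen U ∧ W ⊆ U}, F U with hG
    have hGclosed : IsClosed G :=
      isClosed_biInter fun U hU => (hFclopen U hU.1).isClosed
    have hGW : G ⊆ W := by
      intro x hx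
      rw [← hfix, hΦ]
      exact ⟨W, fun U hU hWU => (Set.mem_iInter₂.mp hx) U ⟨hU, hWU⟩, le_refl W⟩
    have hint : interior G = (closure Gᶜ)ᶜ := by
      rw [closure_compl, compl_compl]
    have hAclopen : IsClopen (interior G) := by
      constructor
      · rw [hint]
        exact (ExtremallyDisconnected.open_closure Gᶜ hGclosed.isOpen_compl).isClosed_compl
      · exact isOpen_interior
    have hFA : F (interior G) ⊆ G := by
      apply Set.subset_iInter₂
      rintro U ⟨hU, hWU⟩
      exact hFmono _ _ hAclopen hU ((interior_subset.trans hGW).trans hWU)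
    have hFA' : F (interior G) ⊆ interior G :=
      interior_maximal hFA (hFclopen _ hAclopen).isOpen
    exact (hLleast _ hAclopen hFA').trans (interior_subset.trans hGW)
end

section
/- Let X be an extremally disconnected Stone space, let F be a monotone map on the clopen subsets of X, and let G be the greatest clopen fixed point of F. Define the monotone operator Ψ on the powerset of X by Ψ(W) = { x ∈ X | ∃ C ⊆ X such that (for every clopen U ⊆ X with Int(C) ⊆ U one has x ∈ F(U)) and C ⊆ W }, where Int denotes topological interior. Then the greatest fixed point of Ψ in the powerset lattice of X equals G (as a subset of X). (The operator Ψ encodes one round of the greatest clopen fixpoint game 𝒢^I_ν(F), in which ∃ moves from x to a set C with x ∈ F(U) for all clopen U ⊇ Int(C) and ∀ picks an element of C, all infinite plays being won by ∃; its greatest fixed point is ∃'s winning region, so this is Proposition 3.1(2).) -/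
/-- Proposition 3.1(2): the greatest fixed point (in the powerset of `X`) of the operator
`Ψ` encoding one round of the greatest clopen fixpoint game `𝒢^I_ν(F)` equals the greatest
clopen fixed point `G` of `F`. -/
theorem gfp_gameI_nu_eq_greatest_clopen_fixedPoint
    {X : Type*} [TopologicalSpace X] [CompactSpace X] [T2Space X]
    [TotallyDisconnectedSpace X] [ExtremallyDisconnected X]
    (F : Set X → Set X) (hFclopen : ∀ U : Set X, IsClopen U → IsClopen (F U))
    (hFmono : ∀ U V : Set X, IsClopen U → IsClopen V → U ⊆ V → F U ⊆ F V)
    (G : Set X) (hGclopen : IsClopen G) (hGfix : F G = G)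
    (hGgreatest : ∀ A : Set X, IsClopen A → A ⊆ F A → A ⊆ G)
    (Ψ : Set X → Set X)
    (hΨ : Ψ = fun W : Set X =>
      {x : X | ∃ C : Set X, (∀ U : Set X, IsClopen U → interior C ⊆ U → x ∈ F U) ∧ C ⊆ W}) :
    Monotone Ψ ∧ ∀ hm : Monotone Ψ, OrderHom.gfp ⟨Ψ, hm⟩ = G := by
  subst hΨ
  have hmono : Monotone (fun W : Set X =>
      {x : X | ∃ C : Set X, (∀ U : Set X, IsClopen U → interior C ⊆ U → x ∈ F U) ∧ C ⊆ W}) := by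
    intro A B hAB x hx
    obtain ⟨C, h1, h2⟩ := hx
    exact ⟨C, h1, h2.trans hAB⟩
  refine ⟨hmono, fun hm => ?_⟩
  set Ψ : (Set X) →o (Set X) := ⟨_, hm⟩ with hΨdef
  apply le_antisymm
  · -- gfp ≤ G
    set W : Set X := OrderHom.gfp Ψ with hW
    have hfix : Ψ W = W := Ψ.map_gfp
    set K : Set X := closure (interior W) with hK
    have hKclopen : IsClopen K := ⟨isClosed_closure,
      ExtremallyDisconnected.open_closure _ isOpen_interior⟩
    have hWFK : W ⊆ F K := by
      intro x hx
      have hx' : x ∈ Ψ W := hfix.symm ▸ hx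
      obtain ⟨C, h1, h2⟩ := hx'
      exact h1 K hKclopen ((interior_mono h2).trans subset_closure)
    have hKFK : K ⊆ F K := by
      have : interior W ⊆ F K := interior_subset.trans hWFK
      calc K ⊆ closure (F K) := closure_mono this
        _ = F K := (hFclopen K hKclopen).1.closure_eq
    have hKG : K ⊆ G := hGgreatest K hKclopen hKFK
    calc W ⊆ F K := hWFK
      _ ⊆ F G := hFmono K G hKclopen hGclopen hKG
      _ = G := hGfix
  · -- G ≤ gfp
    apply OrderHom.le_gfp
    intro x hx
    refine ⟨G, fun U hU hGU => ?_, le_refl G⟩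
    have : interior G = G := hGclopen.2.interior_eq
    have hGsubU : G ⊆ U := this ▸ hGU
    exact hFmono G U hGclopen hU hGsubU (hGfix.symm ▸ hx : x ∈ F G)
end

section
/- Let X be an extremally disconnected Stone space, let F be a monotone map on the clopen subsets of X, and let L be the least clopen fixed point of F. Define the monotone operator Φ' on the powerset of X by Φ'(W) = { x ∈ X | ∃ clopen U ⊆ X with x ∈ F(U) such that for every clopen U' ⊆ X with U ∩ U' ≠ ∅ there exists x' ∈ U' ∩ W }. Then the least fixed point of Φ' in the powerset lattice of X equals L (as a subset of X). (The operator Φ' encodes one round of the game 𝒢^{II}_μ(F), where ∃ moves from x to a clopen U with x ∈ F(U), ∀ challenges with a clopen U' meeting U, and ∃ picks x' ∈ U', all infinite plays being won by ∀; its least fixed point is ∃'s winning region, so this is Proposition 3.2(1).) -/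
/-- Proposition 3.2(1): the least fixed point (in the powerset of `X`) of the operator
`Φ'` encoding one round of the game `𝒢^{II}_μ(F)` equals the least clopen fixed
point `L` of `F`. -/
theorem lfp_gameII_mu_eq_least_clopen_fixedPoint
    {X : Type*} [TopologicalSpace X] [CompactSpace X] [T2Space X]
    [TotallyDisconnectedSpace X] [ExtremallyDisconnected X]
    (F : Set X → Set X) (hFclopen : ∀ U : Set X, IsClopen U → IsClopen (F U))
    (hFmono : ∀ U V : Set X, IsClopen U → IsClopen V → U ⊆ V → F U ⊆ F V)
    (L : Set X) (hLclopen : IsClopen L) (hLfix : F L = L)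
    (hLleast : ∀ A : Set X, IsClopen A → F A ⊆ A → L ⊆ A)
    (Φ' : Set X → Set X)
    (hΦ' : Φ' = fun W : Set X =>
      {x : X | ∃ U : Set X, IsClopen U ∧ x ∈ F U ∧
        ∀ U' : Set X, IsClopen U' → (U ∩ U').Nonempty → ∃ x', x' ∈ U' ∩ W}) :
    Monotone Φ' ∧ ∀ hm : Monotone Φ', OrderHom.lfp ⟨Φ', hm⟩ = L := by
  subst hΦ'
  have hmono : Monotone (fun W : Set X =>
      {x : X | ∃ U : Set X, IsClopen U ∧ x ∈ F U ∧
        ∀ U' : Set X, IsClopen U' → (U ∩ U').Nonempty → ∃ x', x' ∈ U' ∩ W}) := by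
    intro W W' hWW x hx
    obtain ⟨U, hU, hxF, hall⟩ := hx
    exact ⟨U, hU, hxF, fun U' hU' hne => by
      obtain ⟨x', hx'⟩ := hall U' hU' hne
      exact ⟨x', hx'.1, hWW hx'.2⟩⟩
  refine ⟨hmono, fun hm => ?_⟩
  set f : Set X →o Set X := ⟨_, hm⟩ with hf
  set W : Set X := OrderHom.lfp f with hW
  have hfix : f W = W := f.map_lfp
  -- W ⊆ L
  have hWL : W ⊆ L := by
    apply OrderHom.lfp_le
    intro x hx
    obtain ⟨U, hU, hxF, hall⟩ := hx
    have hUL : U ⊆ L := by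
      intro u hu
      by_contra huL
      obtain ⟨x', hx'⟩ := hall Lᶜ hLclopen.compl ⟨u, hu, huL⟩
      exact hx'.1 hx'.2
    exact hLfix ▸ hFmono U L hU hLclopen hUL hxF
  -- W is open: W = f W is a union of clopen sets F U
  have hWopen : IsOpen W := by
    rw [← hfix]
    have : (f W : Set X) = ⋃ U ∈ {U : Set X | IsClopen U ∧
        ∀ U' : Set X, IsClopen U' → (U ∩ U').Nonempty → ∃ x', x' ∈ U' ∩ W}, F U := by
      ext x
      simp only [Set.mem_iUnion, Set.mem_setOf_eq]
      constructor
      · rintro ⟨U, hU, hxF, hall⟩; exact ⟨U, ⟨hU, hall⟩, hxF⟩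
      · rintro ⟨U, ⟨hU, hall⟩, hxF⟩; exact ⟨U, hU, hxF, hall⟩
    rw [this]
    exact isOpen_biUnion fun U hU => (hFclopen U hU.1).isOpen
  -- closure W is clopen
  have hCclopen : IsClopen (closure W) := ⟨isClosed_closure,
    ExtremallyDisconnected.open_closure W hWopen⟩
  -- key: any point meeting closure W in an open set meets W
  have hmeet : ∀ U' : Set X, IsOpen U' → (closure W ∩ U').Nonempty → ∃ x', x' ∈ U' ∩ W := by
    intro U' hU' ⟨u, huC, huU'⟩
    obtain ⟨x', hx1, hx2⟩ := mem_closure_iff.mp huC U' hU' huU'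
    exact ⟨x', hx1, hx2⟩
  -- F (closure W) ⊆ W, hence F (closure W) ⊆ closure W
  have hFC : F (closure W) ⊆ W := by
    intro x hx
    rw [← hfix]
    exact ⟨closure W, hCclopen, hx, fun U' hU' hne => hmeet U' hU'.isOpen
      ⟨hne.choose, hne.choose_spec.1, hne.choose_spec.2⟩⟩
  have hLC : L ⊆ closure W :=
    hLleast (closure W) hCclopen (hFC.trans subset_closure)
  -- L ⊆ W
  have hLW : L ⊆ W := by
    intro x hx
    rw [← hfix]
    refine ⟨L, hLclopen, hLfix.symm ▸ hx, fun U' hU' ⟨u, huL, huU'⟩ => ?_⟩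
    exact hmeet U' hU'.isOpen ⟨u, hLC huL, huU'⟩
  exact le_antisymm hWL hLW
end

section
/- Let X be an extremally disconnected Stone space, let F be a monotone map on the clopen subsets of X, and let G be the greatest clopen fixed point of F. Define the monotone operator Ψ' on the powerset of X by Ψ'(W) = { x ∈ X | ∃ clopen U ⊆ X with x ∈ F(U) and U ⊆ W }. Then the greatest fixed point of Ψ' in the powerset lattice of X equals G (as a subset of X). (The operator Ψ' encodes one round of the game 𝒢^{II}_ν(F), where ∃ moves from x to a clopen U with x ∈ F(U) and ∀ picks an element of U, all infinite plays being won by ∃; its greatest fixed point is ∃'s winning region, so this is Proposition 3.2(2).) -/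
/-- Proposition 3.2(2): the greatest fixed point (in the powerset of `X`) of the operator
`Ψ'` encoding one round of the game `𝒢^{II}_ν(F)` equals the greatest clopen fixed
point `G` of `F`. -/
theorem gfp_gameII_nu_eq_greatest_clopen_fixedPoint
    {X : Type*} [TopologicalSpace X] [CompactSpace X] [T2Space X]
    [TotallyDisconnectedSpace X] [ExtremallyDisconnected X]
    (F : Set X → Set X) (hFclopen : ∀ U : Set X, IsClopen U → IsClopen (F U))
    (hFmono : ∀ U V : Set X, IsClopen U → IsClopen V → U ⊆ V → F U ⊆ F V)
    (G : Set X) (hGclopen : IsClopen G) (hGfix : F G = G)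
    (hGgreatest : ∀ A : Set X, IsClopen A → A ⊆ F A → A ⊆ G)
    (Ψ' : Set X → Set X)
    (hΨ' : Ψ' = fun W : Set X =>
      {x : X | ∃ U : Set X, IsClopen U ∧ x ∈ F U ∧ U ⊆ W}) :
    Monotone Ψ' ∧ ∀ hm : Monotone Ψ', OrderHom.gfp ⟨Ψ', hm⟩ = G := by
  subst hΨ'
  have hmono : Monotone (fun W : Set X =>
      {x : X | ∃ U : Set X, IsClopen U ∧ x ∈ F U ∧ U ⊆ W}) := by
    rintro W V hWV x ⟨U, hU, hx, hUW⟩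
    exact ⟨U, hU, hx, hUW.trans hWV⟩
  refine ⟨hmono, fun hm => ?_⟩
  apply le_antisymm
  · -- gfp ≤ G
    set W : Set X := OrderHom.gfp ⟨_, hm⟩ with hWdef
    have hfix : {x : X | ∃ U : Set X, IsClopen U ∧ x ∈ F U ∧ U ⊆ W} = W :=
      OrderHom.map_gfp ⟨_, hm⟩
    -- W is open
    have hWopen : IsOpen W := by
      rw [isOpen_iff_forall_mem_open]
      intro x hx
      obtain ⟨U, hU, hxU, hUW⟩ : x ∈ {x : X | ∃ U : Set X, IsClopen U ∧ x ∈ F U ∧ U ⊆ W} :=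
        hfix.ge hx
      refine ⟨F U, fun y hy => hfix.le ⟨U, hU, hy, hUW⟩, (hFclopen U hU).isOpen, hxU⟩
    have hAclopen : IsClopen (closure W) :=
      ⟨isClosed_closure, ExtremallyDisconnected.open_closure W hWopen⟩
    have hsub : W ⊆ F (closure W) := by
      intro x hx
      obtain ⟨U, hU, hxU, hUW⟩ : x ∈ {x : X | ∃ U : Set X, IsClopen U ∧ x ∈ F U ∧ U ⊆ W} :=
        hfix.ge hx
      exact hFmono U (closure W) hU hAclopen (hUW.trans subset_closure) hxU
    have hA : closure W ⊆ F (closure W) :=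
      closure_minimal hsub (hFclopen _ hAclopen).isClosed
    exact subset_closure.trans (hGgreatest _ hAclopen hA)
  · -- G ≤ gfp
    refine OrderHom.le_gfp _ ?_
    intro x hx
    exact ⟨G, hGclopen, hGfix.ge hx, subset_rfl⟩
end

section
/- Let X = ℕ ∪ {∞} be the one-point compactification of the discrete space ℕ, and let R be the relation on X given by: x R y iff (there is n ∈ ℕ with x = n+1 and y = n) or (x = ∞ and y = ∞). Define F on the powerset of X by F(S) = {0} ∪ { x ∈ X | ∃ y ∈ S with x R y }. Then the only clopen subset U of X satisfying F(U) ⊆ U is the whole space X; in particular X is the least clopen fixed point of F, while the least fixed point of F in the full powerset is the proper subset ℕ. -/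
open OnePoint

/-- The relation on `ℕ ∪ {∞}`: `x R y` iff `x = n+1` and `y = n` for some natural
number `n`, or `x = ∞ = y`. -/
def exampleRel : OnePoint ℕ → OnePoint ℕ → Prop := fun x y =>
  (∃ n : ℕ, x = ((n + 1 : ℕ) : OnePoint ℕ) ∧ y = ((n : ℕ) : OnePoint ℕ)) ∨
    (x = (∞ : OnePoint ℕ) ∧ y = (∞ : OnePoint ℕ))

/-- The operator `F(S) = {0} ∪ ◇S` on the powerset of `ℕ ∪ {∞}`. -/
def exampleOp : Set (OnePoint ℕ) → Set (OnePoint ℕ) := fun S =>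
  {((0 : ℕ) : OnePoint ℕ)} ∪ {x : OnePoint ℕ | ∃ y ∈ S, exampleRel x y}

lemma prefixed_contains_nat {S : Set (OnePoint ℕ)} (h : exampleOp S ⊆ S) :
    ∀ n : ℕ, ((n : OnePoint ℕ)) ∈ S := by
  intro n
  induction n with
  | zero => exact h (Or.inl rfl)
  | succ k ih => exact h (Or.inr ⟨(k : OnePoint ℕ), ih, Or.inl ⟨k, rfl, rfl⟩⟩)

/-- On the one-point compactification `X = ℕ ∪ {∞}` of the discrete space `ℕ`, the only
clopen `U` with `F(U) ⊆ U` is the whole space; in particular `X` is the least clopen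
fixed point of `F`, while the least fixed point of `F` in the full powerset is the
proper subset `ℕ`. -/
theorem least_clopen_prefixedPoint_exampleOp_is_univ :
    (∀ U : Set (OnePoint ℕ), IsClopen U → exampleOp U ⊆ U → U = Set.univ) ∧
      exampleOp Set.univ = Set.univ ∧
      (exampleOp (Set.range ((↑) : ℕ → OnePoint ℕ)) =
          Set.range ((↑) : ℕ → OnePoint ℕ) ∧
        (∀ S : Set (OnePoint ℕ), exampleOp S ⊆ S →
          Set.range ((↑) : ℕ → OnePoint ℕ) ⊆ S) ∧
        Set.range ((↑) : ℕ → OnePoint ℕ) ≠ Set.univ) := by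
  refine ⟨?_, ?_, ?_, ?_, ?_⟩
  · intro U hU hF
    have hrange : Set.range ((↑) : ℕ → OnePoint ℕ) ⊆ U := by
      rintro _ ⟨n, rfl⟩; exact prefixed_contains_nat hF n
    have hdense := (OnePoint.denseRange_coe (X := ℕ)).mono hrange
    exact hU.isClosed.closure_eq ▸ hdense.closure_eq
  · apply Set.eq_univ_of_univ_subset
    rintro (_ | n) -
    · exact Or.inr ⟨∞, trivial, Or.inr ⟨rfl, rfl⟩⟩
    · cases n with
      | zero => exact Or.inl rfl
      | succ k => exact Or.inr ⟨(k : OnePoint ℕ), trivial, Or.inl ⟨k, rfl, rfl⟩⟩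
  · ext x
    constructor
    · rintro (rfl | ⟨y, ⟨m, rfl⟩, (⟨n, rfl, hy⟩ | ⟨hx, hy⟩)⟩)
      · exact ⟨0, rfl⟩
      · exact ⟨n + 1, rfl⟩
      · exact absurd hy.symm (OnePoint.infty_ne_coe m)
    · rintro ⟨n, rfl⟩
      cases n with
      | zero => exact Or.inl rfl
      | succ k => exact Or.inr ⟨(k : OnePoint ℕ), ⟨k, rfl⟩, Or.inl ⟨k, rfl, rfl⟩⟩
  · rintro S hS _ ⟨n, rfl⟩; exact prefixed_contains_nat hS n
  · intro h
    have : (∞ : OnePoint ℕ) ∈ Set.range ((↑) : ℕ → OnePoint ℕ) := h ▸ trivial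
    exact OnePoint.infty_notMem_range_coe this
end

section
/- Let M₁ = (X₁, R₁, V₁) and M₂ = (X₂, R₂, V₂) be extremally disconnected modal spaces with clopen valuations, and let Z ⊆ X₁ × X₂ be a clopen bisimulation between them. Then for every formula φ of the modal μ-calculus in negation normal form and all points x ∈ X₁, x' ∈ X₂ with (x, x') ∈ Z, one has x ∈ ⟦φ⟧_{V₁} if and only if x' ∈ ⟦φ⟧_{V₂}. -/
/-- Formulas of the modal μ-calculus in negation normal form over propositional
variables of type `P`. -/
inductive MuForm (P : Type*) : Type _
  | var : P → MuForm P
  | nvar : P → MuForm P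
  | bot : MuForm P
  | top : MuForm P
  | and : MuForm P → MuForm P → MuForm P
  | or : MuForm P → MuForm P → MuForm P
  | dia : MuForm P → MuForm P
  | box : MuForm P → MuForm P
  | mu : P → MuForm P → MuForm P
  | nu : P → MuForm P → MuForm P

/-- The variable `p` does not occur negated in the formula. -/
def MuForm.NegFree {P : Type*} (p : P) : MuForm P → Prop
  | .var _ => True
  | .nvar q => q ≠ p
  | .bot => True
  | .top => True
  | .and φ ψ => φ.NegFree p ∧ ψ.NegFree p
  | .or φ ψ => φ.NegFree p ∧ ψ.NegFree p
  | .dia φ => φ.NegFree p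
  | .box φ => φ.NegFree p
  | .mu _ φ => φ.NegFree p
  | .nu _ φ => φ.NegFree p

/-- Well-formedness: every fixpoint binder `μp.φ` / `νp.φ` binds a variable that does
not occur negated in its body. -/
def MuForm.WellFormed {P : Type*} : MuForm P → Prop
  | .var _ => True
  | .nvar _ => True
  | .bot => True
  | .top => True
  | .and φ ψ => φ.WellFormed ∧ ψ.WellFormed
  | .or φ ψ => φ.WellFormed ∧ ψ.WellFormed
  | .dia φ => φ.WellFormed
  | .box φ => φ.WellFormed
  | .mu p φ => φ.NegFree p ∧ φ.WellFormed
  | .nu p φ => φ.NegFree p ∧ φ.WellFormed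

/-- The least clopen fixed point of an operator on subsets of a topological space:
the infimum, in the complete lattice of clopen sets of an extremally disconnected
space, of the clopen prefixed points. -/
def clopenLfp {X : Type*} [TopologicalSpace X] (G : Set X → Set X) : Set X :=
  interior (⋂₀ {A : Set X | IsClopen A ∧ G A ⊆ A})

/-- The greatest clopen fixed point of an operator on subsets of a topological space:
the supremum, in the complete lattice of clopen sets of an extremally disconnected
space, of the clopen postfixed points. -/
def clopenGfp {X : Type*} [TopologicalSpace X] (G : Set X → Set X) : Set X :=
  closure (⋃₀ {A : Set X | IsClopen A ∧ A ⊆ G A})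

/-- The clopen semantics `⟦φ⟧_V` of a μ-calculus formula on a topological Kripke
frame `(X, R)`, where fixpoint operators are interpreted in the lattice of clopen
sets. -/
def clopenSem {X : Type*} [TopologicalSpace X] {P : Type*} [DecidableEq P]
    (R : X → X → Prop) : MuForm P → (P → Set X) → Set X
  | .var p, V => V p
  | .nvar p, V => (V p)ᶜ
  | .bot, _ => ∅
  | .top, _ => Set.univ
  | .and φ ψ, V => clopenSem R φ V ∩ clopenSem R ψ V
  | .or φ ψ, V => clopenSem R φ V ∪ clopenSem R ψ V
  | .dia φ, V => {x : X | ∃ y, R x y ∧ y ∈ clopenSem R φ V}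
  | .box φ, V => {x : X | ∀ y, R x y → y ∈ clopenSem R φ V}
  | .mu p φ, V => clopenLfp (fun U => clopenSem R φ (Function.update V p U))
  | .nu p φ, V => clopenGfp (fun U => clopenSem R φ (Function.update V p U))

section Aux

variable {X : Type*} [TopologicalSpace X]

lemma isClopen_clopenLfp [ExtremallyDisconnected X] (G : Set X → Set X) :
    IsClopen (clopenLfp G) := by
  have hcl : IsClosed (⋂₀ {A : Set X | IsClopen A ∧ G A ⊆ A}) :=
    isClosed_sInter fun A hA => hA.1.isClosed
  constructor
  · have h : interior (⋂₀ {A : Set X | IsClopen A ∧ G A ⊆ A}) =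
        (closure (⋂₀ {A : Set X | IsClopen A ∧ G A ⊆ A})ᶜ)ᶜ := by
      rw [closure_compl, compl_compl]
    rw [clopenLfp, h]
    exact (ExtremallyDisconnected.open_closure _ hcl.isOpen_compl).isClosed_compl
  · exact isOpen_interior

lemma isClopen_clopenGfp [ExtremallyDisconnected X] (G : Set X → Set X) :
    IsClopen (clopenGfp G) := by
  have hop : IsOpen (⋃₀ {A : Set X | IsClopen A ∧ A ⊆ G A}) :=
    isOpen_sUnion fun A hA => hA.1.isOpen
  exact ⟨isClosed_closure, ExtremallyDisconnected.open_closure _ hop⟩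

lemma isClopen_clopenSem {P : Type*} [DecidableEq P] [ExtremallyDisconnected X]
    (R : X → X → Prop)
    (hR : ∀ U : Set X, IsClopen U → IsClopen {x : X | ∃ y ∈ U, R x y})
    (φ : MuForm P) (V : P → Set X) (hV : ∀ q, IsClopen (V q)) :
    IsClopen (clopenSem R φ V) := by
  induction φ generalizing V with
  | var p => exact hV p
  | nvar p => exact (hV p).compl
  | bot => exact isClopen_empty
  | top => exact isClopen_univ
  | and φ ψ ihφ ihψ => exact (ihφ V hV).inter (ihψ V hV)
  | or φ ψ ihφ ihψ => exact (ihφ V hV).union (ihψ V hV)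
  | dia φ ih =>
      have h : clopenSem R (.dia φ) V = {x : X | ∃ y ∈ clopenSem R φ V, R x y} := by
        ext x
        simp only [clopenSem, Set.mem_setOf_eq]
        tauto
      rw [h]; exact hR _ (ih V hV)
  | box φ ih =>
      have h : clopenSem R (.box φ) V = {x : X | ∃ y ∈ (clopenSem R φ V)ᶜ, R x y}ᶜ := by
        ext x
        constructor
        · rintro hx ⟨y, hy, hxy⟩
          exact hy (hx y hxy)
        · intro hx y hxy
          by_contra hy
          exact hx ⟨y, hy, hxy⟩
      rw [h]; exact (hR _ (ih V hV).compl).compl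
  | mu p φ ih => exact isClopen_clopenLfp _
  | nu p φ ih => exact isClopen_clopenGfp _

lemma clopenSem_mono {P : Type*} [DecidableEq P]
    (R : X → X → Prop) (p : P) (φ : MuForm P) (hφ : φ.NegFree p)
    (V V' : P → Set X) (hq : ∀ q, q ≠ p → V q = V' q) (hp : V p ⊆ V' p) :
    clopenSem R φ V ⊆ clopenSem R φ V' := by
  induction φ generalizing V V' with
  | var r =>
      by_cases h : r = p
      · subst h; exact hp
      · show V r ⊆ V' r
        rw [hq r h]
  | nvar r =>
      have h : r ≠ p := hφ
      show (V r)ᶜ ⊆ (V' r)ᶜ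
      rw [hq r h]
  | bot => exact subset_rfl
  | top => exact subset_rfl
  | and φ ψ ihφ ihψ =>
      exact Set.inter_subset_inter (ihφ hφ.1 V V' hq hp) (ihψ hφ.2 V V' hq hp)
  | or φ ψ ihφ ihψ =>
      exact Set.union_subset_union (ihφ hφ.1 V V' hq hp) (ihψ hφ.2 V V' hq hp)
  | dia φ ih =>
      rintro x ⟨y, hxy, hy⟩
      exact ⟨y, hxy, ih hφ V V' hq hp hy⟩
  | box φ ih =>
      intro x hx y hxy
      exact ih hφ V V' hq hp (hx y hxy)
  | mu q ψ ih =>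
      by_cases h : q = p
      · subst h
        have heq : (fun U => clopenSem R ψ (Function.update V q U)) =
            (fun U => clopenSem R ψ (Function.update V' q U)) := by
          funext U
          have hVeq : Function.update V q U = Function.update V' q U := by
            funext r
            by_cases hr : r = q
            · subst hr; simp
            · simp [Function.update_of_ne hr, hq r hr]
          rw [hVeq]
        show clopenLfp _ ⊆ clopenLfp _
        rw [heq]
      · have step : ∀ U, clopenSem R ψ (Function.update V q U) ⊆
            clopenSem R ψ (Function.update V' q U) := by
          intro U
          refine ih hφ _ _ (fun r hr => ?_) ?_
          · by_cases hrq : r = q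
            · subst hrq; simp
            · simp [Function.update_of_ne hrq, hq r hr]
          · simpa [Function.update_of_ne (Ne.symm h)] using hp
        show clopenLfp _ ⊆ clopenLfp _
        apply interior_mono
        apply Set.sInter_subset_sInter
        intro A hA
        exact ⟨hA.1, (step A).trans hA.2⟩
  | nu q ψ ih =>
      by_cases h : q = p
      · subst h
        have heq : (fun U => clopenSem R ψ (Function.update V q U)) =
            (fun U => clopenSem R ψ (Function.update V' q U)) := by
          funext U
          have hVeq : Function.update V q U = Function.update V' q U := by
            funext r
            by_cases hr : r = q
            · subst hr; simp
            · simp [Function.update_of_ne hr, hq r hr]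
          rw [hVeq]
        show clopenGfp _ ⊆ clopenGfp _
        rw [heq]
      · have step : ∀ U, clopenSem R ψ (Function.update V q U) ⊆
            clopenSem R ψ (Function.update V' q U) := by
          intro U
          refine ih hφ _ _ (fun r hr => ?_) ?_
          · by_cases hrq : r = q
            · subst hrq; simp
            · simp [Function.update_of_ne hrq, hq r hr]
          · simpa [Function.update_of_ne (Ne.symm h)] using hp
        show clopenGfp _ ⊆ clopenGfp _
        apply closure_mono
        apply Set.sUnion_mono
        intro A hA
        exact ⟨hA.1, hA.2.trans (step A)⟩

end Aux

/-- One-directional version of bisimulation invariance. -/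
lemma clopenSem_dir
    {X₁ : Type*} [TopologicalSpace X₁] [ExtremallyDisconnected X₁]
    {X₂ : Type*} [TopologicalSpace X₂] [ExtremallyDisconnected X₂]
    (R₁ : X₁ → X₁ → Prop)
    (hR₁_clopen : ∀ U : Set X₁, IsClopen U → IsClopen {x : X₁ | ∃ y ∈ U, R₁ x y})
    (R₂ : X₂ → X₂ → Prop)
    (hR₂_clopen : ∀ U : Set X₂, IsClopen U → IsClopen {x : X₂ | ∃ y ∈ U, R₂ x y})
    {P : Type*} [DecidableEq P]
    (Z : Set (X₁ × X₂))
    (hZ_forth : ∀ x x', (x, x') ∈ Z → ∀ y, R₁ x y → ∃ y', R₂ x' y' ∧ (y, y') ∈ Z)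
    (hZ_back : ∀ x x', (x, x') ∈ Z → ∀ y', R₂ x' y' → ∃ y, R₁ x y ∧ (y, y') ∈ Z)
    (hZ_img : ∀ U₁ : Set X₁, IsClopen U₁ →
      IsClopen {x' : X₂ | ∃ x ∈ U₁, (x, x') ∈ Z})
    (hZ_preimg : ∀ U₂ : Set X₂, IsClopen U₂ →
      IsClopen {x : X₁ | ∃ x' ∈ U₂, (x, x') ∈ Z})
    (φ : MuForm P) :
    ∀ (V₁ : P → Set X₁) (V₂ : P → Set X₂),
      (∀ q, IsClopen (V₁ q)) → (∀ q, IsClopen (V₂ q)) →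
      φ.WellFormed →
      (∀ x x', (x, x') ∈ Z → ∀ q, x ∈ V₁ q → x' ∈ V₂ q) →
      (∀ x x', (x, x') ∈ Z → ∀ q, ¬ φ.NegFree q → x' ∈ V₂ q → x ∈ V₁ q) →
      ∀ x x', (x, x') ∈ Z → x ∈ clopenSem R₁ φ V₁ → x' ∈ clopenSem R₂ φ V₂ := by
  induction φ with
  | var p =>
      intro V₁ V₂ _ _ _ hfwd _ x x' hxx' hx
      exact hfwd x x' hxx' p hx
  | nvar p =>
      intro V₁ V₂ _ _ _ _ hback x x' hxx' hx
      intro hx'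
      exact hx (hback x x' hxx' p (fun h => h rfl) hx')
  | bot => intro _ _ _ _ _ _ _ x x' _ hx; exact absurd hx (Set.notMem_empty x)
  | top => intro _ _ _ _ _ _ _ x x' _ _; trivial
  | and φ ψ ihφ ihψ =>
      intro V₁ V₂ hV₁ hV₂ hwf hfwd hback x x' hxx' hx
      exact ⟨ihφ V₁ V₂ hV₁ hV₂ hwf.1 hfwd
              (fun y y' h q hn => hback y y' h q (fun hh => hn hh.1)) x x' hxx' hx.1,
             ihψ V₁ V₂ hV₁ hV₂ hwf.2 hfwd
              (fun y y' h q hn => hback y y' h q (fun hh => hn hh.2)) x x' hxx' hx.2⟩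
  | or φ ψ ihφ ihψ =>
      intro V₁ V₂ hV₁ hV₂ hwf hfwd hback x x' hxx' hx
      rcases hx with hx | hx
      · exact Or.inl (ihφ V₁ V₂ hV₁ hV₂ hwf.1 hfwd
          (fun y y' h q hn => hback y y' h q (fun hh => hn hh.1)) x x' hxx' hx)
      · exact Or.inr (ihψ V₁ V₂ hV₁ hV₂ hwf.2 hfwd
          (fun y y' h q hn => hback y y' h q (fun hh => hn hh.2)) x x' hxx' hx)
  | dia φ ih =>
      intro V₁ V₂ hV₁ hV₂ hwf hfwd hback x x' hxx' hx
      obtain ⟨y, hxy, hy⟩ := hx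
      obtain ⟨y', hx'y', hyy'⟩ := hZ_forth x x' hxx' y hxy
      exact ⟨y', hx'y', ih V₁ V₂ hV₁ hV₂ hwf hfwd hback y y' hyy' hy⟩
  | box φ ih =>
      intro V₁ V₂ hV₁ hV₂ hwf hfwd hback x x' hxx' hx
      intro y' hx'y'
      obtain ⟨y, hxy, hyy'⟩ := hZ_back x x' hxx' y' hx'y'
      exact ih V₁ V₂ hV₁ hV₂ hwf hfwd hback y y' hyy' (hx y hxy)
  | mu p ψ ih =>
      intro V₁ V₂ hV₁ hV₂ hwf hfwd hback x x' hxx' hx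
      have hNF : ψ.NegFree p := hwf.1
      have hwfψ : ψ.WellFormed := hwf.2
      set G₂ : Set X₂ → Set X₂ := fun U => clopenSem R₂ ψ (Function.update V₂ p U)
        with hG₂def
      have hL₂ : IsClopen (clopenLfp G₂) := isClopen_clopenLfp _
      set L₂ : Set X₂ := clopenLfp G₂ with hL₂def
      set A₁ : Set X₁ := {x : X₁ | ∃ x' ∈ L₂ᶜ, (x, x') ∈ Z}ᶜ with hA₁def
      have hA₁ : IsClopen A₁ := (hZ_preimg _ hL₂.compl).compl
      have hupd₂ : ∀ (U : Set X₂), IsClopen U → ∀ q,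
          IsClopen (Function.update V₂ p U q) := by
        intro U hU q
        by_cases h : q = p
        · subst h; simpa using hU
        · simpa [Function.update_of_ne h] using hV₂ q
      have hupd₁ : ∀ (U : Set X₁), IsClopen U → ∀ q,
          IsClopen (Function.update V₁ p U q) := by
        intro U hU q
        by_cases h : q = p
        · subst h; simpa using hU
        · simpa [Function.update_of_ne h] using hV₁ q
      -- L₂ is a prefixed point of G₂
      have hpre : G₂ L₂ ⊆ L₂ := by
        have hclo : IsClopen (G₂ L₂) :=
          isClopen_clopenSem R₂ hR₂_clopen ψ _ (hupd₂ L₂ hL₂)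
        have hsub : G₂ L₂ ⊆ ⋂₀ {A : Set X₂ | IsClopen A ∧ G₂ A ⊆ A} := by
          intro z hz
          refine Set.mem_sInter.2 fun A hA => ?_
          have hmono : G₂ L₂ ⊆ G₂ A := by
            apply clopenSem_mono R₂ p ψ hNF
            · intro q hq; simp [Function.update_of_ne hq]
            · simp only [Function.update_self]
              exact interior_subset.trans (Set.sInter_subset_of_mem hA)
          exact hA.2 (hmono hz)
        exact interior_maximal hsub hclo.isOpen
      -- A₁ is a prefixed point of G₁
      have hpre₁ : clopenSem R₁ ψ (Function.update V₁ p A₁) ⊆ A₁ := by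
        intro z hz
        intro hex
        obtain ⟨z', hz'L, hzz'⟩ := hex
        have hfwd' : ∀ y y', (y, y') ∈ Z → ∀ q,
            y ∈ Function.update V₁ p A₁ q → y' ∈ Function.update V₂ p L₂ q := by
          intro y y' hyy' q hy
          by_cases h : q = p
          · subst h
            simp only [Function.update_self] at hy ⊢
            by_contra hy'
            exact hy ⟨y', hy', hyy'⟩
          · rw [Function.update_of_ne h] at hy ⊢
            exact hfwd y y' hyy' q hy
        have hback' : ∀ y y', (y, y') ∈ Z → ∀ q, ¬ ψ.NegFree q →
            y' ∈ Function.update V₂ p L₂ q → y ∈ Function.update V₁ p A₁ q := by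
          intro y y' hyy' q hn hy'
          have h : q ≠ p := fun hh => hn (hh ▸ hNF)
          rw [Function.update_of_ne h] at hy' ⊢
          exact hback y y' hyy' q hn hy'
        have := ih (Function.update V₁ p A₁) (Function.update V₂ p L₂)
          (hupd₁ A₁ hA₁) (hupd₂ L₂ hL₂) hwfψ hfwd' hback' z z' hzz' hz
        exact hz'L (hpre this)
      have hxA₁ : x ∈ A₁ := by
        have hL₁sub : clopenSem R₁ (.mu p ψ) V₁ ⊆ A₁ :=
          interior_subset.trans (Set.sInter_subset_of_mem ⟨hA₁, hpre₁⟩)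
        exact hL₁sub hx
      by_contra hx'
      exact hxA₁ ⟨x', hx', hxx'⟩
  | nu p ψ ih =>
      intro V₁ V₂ hV₁ hV₂ hwf hfwd hback x x' hxx' hx
      have hNF : ψ.NegFree p := hwf.1
      have hwfψ : ψ.WellFormed := hwf.2
      set G₁ : Set X₁ → Set X₁ := fun U => clopenSem R₁ ψ (Function.update V₁ p U)
        with hG₁def
      have hN₁ : IsClopen (clopenGfp G₁) := isClopen_clopenGfp _
      set N₁ : Set X₁ := clopenGfp G₁ with hN₁def
      set A₂ : Set X₂ := {x' : X₂ | ∃ x ∈ N₁, (x, x') ∈ Z} with hA₂def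
      have hA₂ : IsClopen A₂ := hZ_img _ hN₁
      have hupd₂ : ∀ (U : Set X₂), IsClopen U → ∀ q,
          IsClopen (Function.update V₂ p U q) := by
        intro U hU q
        by_cases h : q = p
        · subst h; simpa using hU
        · simpa [Function.update_of_ne h] using hV₂ q
      have hupd₁ : ∀ (U : Set X₁), IsClopen U → ∀ q,
          IsClopen (Function.update V₁ p U q) := by
        intro U hU q
        by_cases h : q = p
        · subst h; simpa using hU
        · simpa [Function.update_of_ne h] using hV₁ q
      -- N₁ is a postfixed point of G₁
      have hpost : N₁ ⊆ G₁ N₁ := by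
        have hclo : IsClopen (G₁ N₁) :=
          isClopen_clopenSem R₁ hR₁_clopen ψ _ (hupd₁ N₁ hN₁)
        have hsub : ⋃₀ {A : Set X₁ | IsClopen A ∧ A ⊆ G₁ A} ⊆ G₁ N₁ := by
          apply Set.sUnion_subset
          intro A hA
          refine hA.2.trans ?_
          apply clopenSem_mono R₁ p ψ hNF
          · intro q hq; simp [Function.update_of_ne hq]
          · simp only [Function.update_self]
            exact (Set.subset_sUnion_of_mem hA).trans subset_closure
        exact closure_minimal hsub hclo.isClosed
      -- A₂ is a postfixed point of G₂
      have hpost₂ : A₂ ⊆ clopenSem R₂ ψ (Function.update V₂ p A₂) := by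
        rintro z' ⟨z, hzN, hzz'⟩
        have hfwd' : ∀ y y', (y, y') ∈ Z → ∀ q,
            y ∈ Function.update V₁ p N₁ q → y' ∈ Function.update V₂ p A₂ q := by
          intro y y' hyy' q hy
          by_cases h : q = p
          · subst h
            simp only [Function.update_self] at hy ⊢
            exact ⟨y, hy, hyy'⟩
          · rw [Function.update_of_ne h] at hy ⊢
            exact hfwd y y' hyy' q hy
        have hback' : ∀ y y', (y, y') ∈ Z → ∀ q, ¬ ψ.NegFree q →
            y' ∈ Function.update V₂ p A₂ q → y ∈ Function.update V₁ p N₁ q := by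
          intro y y' hyy' q hn hy'
          have h : q ≠ p := fun hh => hn (hh ▸ hNF)
          rw [Function.update_of_ne h] at hy' ⊢
          exact hback y y' hyy' q hn hy'
        exact ih (Function.update V₁ p N₁) (Function.update V₂ p A₂)
          (hupd₁ N₁ hN₁) (hupd₂ A₂ hA₂) hwfψ hfwd' hback' z z' hzz' (hpost hzN)
      have hA₂sub : A₂ ⊆ clopenSem R₂ (.nu p ψ) V₂ := by
        show A₂ ⊆ closure (⋃₀ {A : Set X₂ |
          IsClopen A ∧ A ⊆ clopenSem R₂ ψ (Function.update V₂ p A)})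
        refine subset_trans ?_ subset_closure
        exact Set.subset_sUnion_of_mem ⟨hA₂, hpost₂⟩
      exact hA₂sub ⟨x, hx, hxx'⟩

/-- Proposition 5.2: truth of topological μ-calculus formulas is invariant under
clopen bisimulations between extremally disconnected modal spaces with clopen
valuations. -/
theorem clopenSem_invariant_under_clopen_bisimulation
    {X₁ : Type*} [TopologicalSpace X₁] [CompactSpace X₁] [T2Space X₁]
    [TotallyDisconnectedSpace X₁] [ExtremallyDisconnected X₁]
    {X₂ : Type*} [TopologicalSpace X₂] [CompactSpace X₂] [T2Space X₂]
    [TotallyDisconnectedSpace X₂] [ExtremallyDisconnected X₂]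
    (R₁ : X₁ → X₁ → Prop)
    (hR₁_pointClosed : ∀ x : X₁, IsClosed {y : X₁ | R₁ x y})
    (hR₁_clopen : ∀ U : Set X₁, IsClopen U → IsClopen {x : X₁ | ∃ y ∈ U, R₁ x y})
    (R₂ : X₂ → X₂ → Prop)
    (hR₂_pointClosed : ∀ x : X₂, IsClosed {y : X₂ | R₂ x y})
    (hR₂_clopen : ∀ U : Set X₂, IsClopen U → IsClopen {x : X₂ | ∃ y ∈ U, R₂ x y})
    {P : Type*} [DecidableEq P]
    (V₁ : P → Set X₁) (hV₁ : ∀ q : P, IsClopen (V₁ q))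
    (V₂ : P → Set X₂) (hV₂ : ∀ q : P, IsClopen (V₂ q))
    (Z : Set (X₁ × X₂))
    (hZ_atoms : ∀ x x', (x, x') ∈ Z → ∀ q : P, x ∈ V₁ q ↔ x' ∈ V₂ q)
    (hZ_forth : ∀ x x', (x, x') ∈ Z → ∀ y, R₁ x y → ∃ y', R₂ x' y' ∧ (y, y') ∈ Z)
    (hZ_back : ∀ x x', (x, x') ∈ Z → ∀ y', R₂ x' y' → ∃ y, R₁ x y ∧ (y, y') ∈ Z)
    (hZ_img : ∀ U₁ : Set X₁, IsClopen U₁ →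
      IsClopen {x' : X₂ | ∃ x ∈ U₁, (x, x') ∈ Z})
    (hZ_preimg : ∀ U₂ : Set X₂, IsClopen U₂ →
      IsClopen {x : X₁ | ∃ x' ∈ U₂, (x, x') ∈ Z})
    (φ : MuForm P) (hφ : φ.WellFormed)
    (x : X₁) (x' : X₂) (hxx' : (x, x') ∈ Z) :
    x ∈ clopenSem R₁ φ V₁ ↔ x' ∈ clopenSem R₂ φ V₂ := by
  constructor
  · exact clopenSem_dir R₁ hR₁_clopen R₂ hR₂_clopen Z hZ_forth hZ_back hZ_img hZ_preimg
      φ V₁ V₂ hV₁ hV₂ hφ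
      (fun y y' h q => (hZ_atoms y y' h q).mp)
      (fun y y' h q _ => (hZ_atoms y y' h q).mpr)
      x x' hxx'
  · set Z' : Set (X₂ × X₁) := {q : X₂ × X₁ | (q.2, q.1) ∈ Z} with hZ'def
    have hmem : ∀ (a : X₂) (b : X₁), (a, b) ∈ Z' ↔ (b, a) ∈ Z := fun _ _ => Iff.rfl
    exact clopenSem_dir R₂ hR₂_clopen R₁ hR₁_clopen Z'
      (fun a b hab y' h => by
        obtain ⟨y, hy, hyZ⟩ := hZ_back b a hab y' h
        exact ⟨y, hy, hyZ⟩)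
      (fun a b hab y h => by
        obtain ⟨y', hy', hyZ⟩ := hZ_forth b a hab y h
        exact ⟨y', hy', hyZ⟩)
      (fun U hU => hZ_preimg U hU)
      (fun U hU => hZ_img U hU)
      φ V₂ V₁ hV₂ hV₁ hφ
      (fun a b h q => (hZ_atoms b a h q).mpr)
      (fun a b h q _ => (hZ_atoms b a h q).mp)
      x' x hxx'
end
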